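/- Let Tⁿ be the flat n-torus. Every geodesic γ : [0,1] → Tⁿ projects in each coordinate to a geodesic of the circle: for each k ∈ {1, …, n}, the path π_k ∘ γ : [0,1] → ℝ/ℤ is a geodesic of ℝ/ℤ with its quotient metric. -/

import Mathlib

/-- A geodesic in a metric space: a continuous path `γ : [0,1] → X` moving at
constant speed `c` and realizing distances, i.e. `d(γ s, γ t) = c·|s − t|`. -/
def IsGeodesic {X : Type*} [PseudoMetricSpace X] (γ : C(unitInterval, X)) : Prop :=
  ∃ c : ℝ, ∀ s t : unitInterval, dist (γ s) (γ t) = c * |(s : ℝ) - (t : ℝ)|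


/-- The integer lattice `ℤⁿ` inside Euclidean space `ℝⁿ`. -/
noncomputable def intLattice (n : ℕ) : AddSubgroup (EuclideanSpace ℝ (Fin n)) where
  carrier := {x | ∀ i, ∃ m : ℤ, x i = m}
  zero_mem' := fun i => ⟨0, by simp⟩
  add_mem' := by
    intro a b ha hb i
    obtain ⟨m, hm⟩ := ha i
    obtain ⟨l, hl⟩ := hb i
    exact ⟨m + l, by push_cast [PiLp.add_apply, hm, hl]; ring⟩
  neg_mem' := by
    intro a ha i
    obtain ⟨m, hm⟩ := ha i
    exact ⟨-m, by push_cast [PiLp.neg_apply, hm]; ring⟩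

instance intLattice_isClosed (n : ℕ) :
    IsClosed ((intLattice n : AddSubgroup (EuclideanSpace ℝ (Fin n))) :
      Set (EuclideanSpace ℝ (Fin n))) := by
  have : ((intLattice n : AddSubgroup (EuclideanSpace ℝ (Fin n))) :
      Set (EuclideanSpace ℝ (Fin n))) =
      ⋂ i, (fun x : EuclideanSpace ℝ (Fin n) => x i) ⁻¹'
        (Set.range ((↑) : ℤ → ℝ)) := by
    ext x
    simp [intLattice, Set.mem_iInter, eq_comm]
  rw [this]
  exact isClosed_iInter fun i =>
    Int.isClosedEmbedding_coe_real.isClosed_range.preimage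
      (EuclideanSpace.proj i).continuous

/-- The flat `n`-torus `ℝⁿ/ℤⁿ`, equipped with the quotient metric induced by
the Euclidean metric on `ℝⁿ`. -/
abbrev FlatTorus (n : ℕ) := EuclideanSpace ℝ (Fin n) ⧸ intLattice n


/-- Projection of the flat torus onto its `k`-th circle factor `ℝ/ℤ`
(realized as `AddCircle (1 : ℝ)` with its quotient metric). -/
noncomputable def torusProj (n : ℕ) (k : Fin n) : FlatTorus n →+ AddCircle (1 : ℝ) :=
  QuotientAddGroup.lift (intLattice n)
    ((QuotientAddGroup.mk' (AddSubgroup.zmultiples (1 : ℝ))).comp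
      { toFun := fun x : EuclideanSpace ℝ (Fin n) => x k
        map_zero' := rfl
        map_add' := fun _ _ => rfl })
    (by
      intro x hx
      obtain ⟨m, hm⟩ := hx k
      show QuotientAddGroup.mk' (AddSubgroup.zmultiples (1 : ℝ)) (x k) = 0
      rw [QuotientAddGroup.mk'_apply, QuotientAddGroup.eq_zero_iff]
      exact ⟨m, by simp [hm]⟩)

lemma euc_norm_sq {n : ℕ} (x : EuclideanSpace ℝ (Fin n)) : ‖x‖ ^ 2 = ∑ i, (x i)^2 := by
  rw [EuclideanSpace.norm_eq, Real.sq_sqrt (by positivity)]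
  simp [Real.norm_eq_abs, sq_abs]

lemma addCircle_norm_round (x : ℝ) : ‖(x : AddCircle (1:ℝ))‖ = |x - round x| := by
  simp [AddCircle.norm_eq]

lemma addCircle_eq_of_int (x : ℝ) (m : ℤ) : ((x + m : ℝ) : AddCircle (1:ℝ)) = (x : AddCircle (1:ℝ)) := by
  rw [QuotientAddGroup.eq_iff_sub_mem]
  refine ⟨m, by simp⟩

lemma norm_mk_sq (n : ℕ) (z : EuclideanSpace ℝ (Fin n)) :
    ‖(QuotientAddGroup.mk z : FlatTorus n)‖ ^ 2
      = ∑ j, ‖((z j : ℝ) : AddCircle (1:ℝ))‖ ^ 2 := by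
  have hR : (0:ℝ) ≤ ∑ j, ‖((z j : ℝ) : AddCircle (1:ℝ))‖ ^ 2 := by positivity
  set R := Real.sqrt (∑ j, ‖((z j : ℝ) : AddCircle (1:ℝ))‖ ^ 2) with hRdef
  have key : ‖(QuotientAddGroup.mk z : FlatTorus n)‖ = R := by
    apply le_antisymm
    · -- use representative w' j = z j - round (z j)
      set w : EuclideanSpace ℝ (Fin n) := WithLp.toLp 2 (fun j => z j - round (z j) : Fin n → ℝ) with hw
      have hmk : (QuotientAddGroup.mk w : FlatTorus n) = QuotientAddGroup.mk z := by
        rw [QuotientAddGroup.eq_iff_sub_mem]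
        intro i
        exact ⟨-round (z i), by push_cast [PiLp.sub_apply, hw]; ring⟩
      have h1 : ‖(QuotientAddGroup.mk z : FlatTorus n)‖ ≤ ‖w‖ := by
        rw [← hmk]; exact QuotientAddGroup.norm_mk_le_norm (S := intLattice n) (m := w)
      have h2 : ‖w‖ = R := by
        rw [hRdef, EuclideanSpace.norm_eq]
        refine congrArg Real.sqrt (Finset.sum_congr rfl fun j _ => ?_)
        rw [addCircle_norm_round, hw]
        simp [Real.norm_eq_abs]
      rwa [h2] at h1
    · -- lower bound: every representative has norm ≥ R
      rw [QuotientAddGroup.le_norm_iff]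
      intro w (hwmem : w ∈ {m : EuclideanSpace ℝ (Fin n) | (m : FlatTorus n) = QuotientAddGroup.mk z})
      have hsub : w - z ∈ intLattice n := by
        simp only [Set.mem_setOf_eq] at hwmem
        rwa [QuotientAddGroup.eq_iff_sub_mem] at hwmem
      have hle : ∀ j, ‖((z j : ℝ) : AddCircle (1:ℝ))‖ ≤ |w j| := by
        intro j
        obtain ⟨m, hm⟩ := hsub j
        have : ((z j : ℝ) : AddCircle (1:ℝ)) = ((w j : ℝ) : AddCircle (1:ℝ)) := by
          rw [show w j = z j + m by
            have := hm
            rw [PiLp.sub_apply] at this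
            linarith]
          exact (addCircle_eq_of_int _ _).symm
        rw [this]
        simpa using QuotientAddGroup.norm_mk_le_norm (S := AddSubgroup.zmultiples (1:ℝ)) (m := w j)
      rw [hRdef]
      rw [show ‖w‖ = Real.sqrt (‖w‖^2) by rw [Real.sqrt_sq (norm_nonneg _)]]
      apply Real.sqrt_le_sqrt
      rw [euc_norm_sq]
      exact Finset.sum_le_sum fun j _ => by
        have := hle j
        nlinarith [norm_nonneg ((z j : ℝ) : AddCircle (1:ℝ)), abs_nonneg (w j), sq_abs (w j)]
  rw [key, Real.sq_sqrt hR]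

lemma torusProj_mk (n : ℕ) (k : Fin n) (x : EuclideanSpace ℝ (Fin n)) :
    torusProj n k (QuotientAddGroup.mk x) = ((x k : ℝ) : AddCircle (1:ℝ)) := rfl

lemma dist_sq_eq (n : ℕ) (a b : FlatTorus n) :
    dist a b ^ 2 = ∑ j, dist (torusProj n j a) (torusProj n j b) ^ 2 := by
  obtain ⟨x, rfl⟩ := QuotientAddGroup.mk_surjective a
  obtain ⟨y, rfl⟩ := QuotientAddGroup.mk_surjective b
  rw [dist_eq_norm, ← QuotientAddGroup.mk_sub, norm_mk_sq]
  refine Finset.sum_congr rfl fun j _ => ?_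
  rw [torusProj_mk, torusProj_mk, dist_eq_norm]
  congr 2

lemma proj_dist_le (n : ℕ) (k : Fin n) (a b : FlatTorus n) :
    dist (torusProj n k a) (torusProj n k b) ≤ dist a b := by
  have h := dist_sq_eq n a b
  have h1 : dist (torusProj n k a) (torusProj n k b) ^ 2 ≤ dist a b ^ 2 := by
    rw [h]
    exact Finset.single_le_sum (f := fun j => dist (torusProj n j a) (torusProj n j b) ^ 2)
      (fun j _ => by positivity) (Finset.mem_univ k)
  nlinarith [dist_nonneg (x := torusProj n k a) (y := torusProj n k b), dist_nonneg (x := a) (y := b)]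

lemma vec_eq_of_le {n : ℕ} (a b : EuclideanSpace ℝ (Fin n)) (h0 : ∀ j, 0 ≤ a j)
    (hle : ∀ j, a j ≤ b j) (hn : ‖b‖ ≤ ‖a‖) : a = b := by
  have hsq : ∑ j, (b j) ^ 2 ≤ ∑ j, (a j) ^ 2 := by
    rw [← euc_norm_sq, ← euc_norm_sq]
    exact pow_le_pow_left₀ (norm_nonneg _) hn 2
  have hsq' : ∑ j, (a j) ^ 2 ≤ ∑ j, (b j) ^ 2 :=
    Finset.sum_le_sum fun j _ => by nlinarith [h0 j, hle j]
  have heq : ∀ j ∈ Finset.univ, (a j) ^ 2 = (b j) ^ 2 :=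
    (Finset.sum_eq_sum_iff_of_le (fun j _ => by nlinarith [h0 j, hle j])).1
      (le_antisymm hsq' hsq)
  ext j
  have := heq j (Finset.mem_univ j)
  nlinarith [h0 j, hle j]

open scoped RealInnerProductSpace

/-- **Coordinate projections of torus geodesics are circle geodesics.**
Every geodesic `γ : [0,1] → Tⁿ` of the flat `n`-torus projects, in each
coordinate `k`, to a geodesic of the circle `ℝ/ℤ`: the path `π_k ∘ γ` is a
(continuous) geodesic of `ℝ/ℤ` with its quotient metric. -/
theorem flatTorus_geodesic_proj_isGeodesic (n : ℕ) (k : Fin n)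
    (γ : C(unitInterval, FlatTorus n)) (hγ : IsGeodesic γ) :
    ∃ g : C(unitInterval, AddCircle (1 : ℝ)),
      (∀ t, g t = torusProj n k (γ t)) ∧ IsGeodesic g := by
  obtain ⟨c, hc⟩ := hγ
  have hcont : Continuous fun t => torusProj n k (γ t) := by
    have hlip : LipschitzWith 1 (torusProj n k) :=
      LipschitzWith.of_dist_le_mul fun a b => by simpa using proj_dist_le n k a b
    exact hlip.continuous.comp γ.continuous
  refine ⟨⟨fun t => torusProj n k (γ t), hcont⟩, fun t => rfl, ?_⟩
  -- the coordinate distance vector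
  set D : unitInterval → unitInterval → EuclideanSpace ℝ (Fin n) :=
    fun s t => WithLp.toLp 2 (fun j => dist (torusProj n j (γ s)) (torusProj n j (γ t)) : Fin n → ℝ) with hD
  have hc0 : 0 ≤ c := by
    have := hc 1 0
    simp only [Set.Icc.coe_one, Set.Icc.coe_zero, sub_zero, abs_one, mul_one] at this
    rw [← this]; exact dist_nonneg
  have hDnorm : ∀ s t : unitInterval, ‖D s t‖ = c * |(s:ℝ) - (t:ℝ)| := by
    intro s t
    have h1 : ‖D s t‖ ^ 2 = (c * |(s:ℝ) - (t:ℝ)|) ^ 2 := by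
      rw [euc_norm_sq, ← hc s t, dist_sq_eq]
    have h2 : 0 ≤ c * |(s:ℝ) - (t:ℝ)| := by positivity
    nlinarith [norm_nonneg (D s t)]
  -- additivity along the interval
  have hadd : ∀ s u t : unitInterval, (s:ℝ) ≤ u → (u:ℝ) ≤ t → D s t = D s u + D u t := by
    intro s u t hsu hut
    apply vec_eq_of_le
    · intro j; exact dist_nonneg
    · intro j
      exact dist_triangle _ (torusProj n j (γ u)) _
    · calc ‖D s u + D u t‖ ≤ ‖D s u‖ + ‖D u t‖ := norm_add_le _ _
        _ = c * |(s:ℝ) - u| + c * |(u:ℝ) - t| := by rw [hDnorm, hDnorm]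
        _ = c * |(s:ℝ) - (t:ℝ)| := by
            rw [abs_of_nonpos (by linarith), abs_of_nonpos (by linarith),
              abs_of_nonpos (by linarith)]
            ring
        _ = ‖D s t‖ := (hDnorm s t).symm
  -- inner products of the partial-distance vectors
  have hinner : ∀ u t : unitInterval, (u:ℝ) ≤ t → ⟪D 0 t, D 0 u⟫ = c^2 * t * u := by
    intro u t hut
    have h0u : (0:ℝ) ≤ (u:ℝ) := u.2.1
    have hsub : D 0 t - D 0 u = D u t := by
      rw [hadd 0 u t (by simpa using h0u) hut]; abel
    have hexp := norm_sub_sq_real (D 0 t) (D 0 u)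
    rw [hsub] at hexp
    have e1 : ‖D u t‖ = c * ((t:ℝ) - u) := by
      rw [hDnorm, abs_of_nonpos (by linarith)]; ring
    have h0t : (0:ℝ) ≤ (t:ℝ) := t.2.1
    have e2 : ‖D 0 t‖ = c * (t:ℝ) := by
      rw [hDnorm, Set.Icc.coe_zero, abs_of_nonpos (by linarith)]; ring
    have e3 : ‖D 0 u‖ = c * (u:ℝ) := by
      rw [hDnorm, Set.Icc.coe_zero, abs_of_nonpos (by linarith)]; ring
    rw [e1, e2, e3] at hexp
    nlinarith [hexp]
  -- scaling: D 0 u = u • D 0 1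
  have hscale : ∀ u : unitInterval, D 0 u = (u:ℝ) • D 0 1 := by
    intro u
    have hu1 : (u:ℝ) ≤ (1:unitInterval) := by simpa using u.2.2
    have h0u : (0:ℝ) ≤ (u:ℝ) := u.2.1
    have hz : ‖(1:ℝ) • D 0 u - (u:ℝ) • D 0 1‖ ^ 2 = 0 := by
      have hIu : ⟪D 0 u, D 0 1⟫ = c ^ 2 * (u:ℝ) := by
        rw [real_inner_comm, hinner u 1 hu1, Set.Icc.coe_one]; ring
      have e2 : ‖D 0 u‖ = c * (u:ℝ) := by
        rw [hDnorm, Set.Icc.coe_zero, abs_of_nonpos (by linarith)]; ring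
      have e3 : ‖D 0 1‖ = c * 1 := by
        rw [hDnorm]; norm_num
      rw [norm_sub_sq_real, norm_smul, norm_smul, real_inner_smul_left,
        real_inner_smul_right, hIu, e2, e3]
      simp only [Real.norm_eq_abs, abs_of_nonneg h0u, abs_one]
      ring
    have := norm_eq_zero.1 (pow_eq_zero_iff (n := 2) (by norm_num) |>.1 hz)
    rw [sub_eq_zero, one_smul] at this
    exact this
  -- conclude
  refine ⟨D 0 1 k, fun s t => ?_⟩
  have key : ∀ s t : unitInterval, (s:ℝ) ≤ t →
      dist (torusProj n k (γ s)) (torusProj n k (γ t)) = D 0 1 k * ((t:ℝ) - s) := by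
    intro s t hst
    have h0s : ((0:unitInterval):ℝ) ≤ (s:ℝ) := by simpa using s.2.1
    have hDst : D s t = D 0 t - D 0 s := by
      rw [hadd 0 s t h0s hst]; abel
    have : D s t = ((t:ℝ) - (s:ℝ)) • D 0 1 := by
      rw [hDst, hscale s, hscale t, sub_smul]
    have happ : D s t k = ((t:ℝ) - (s:ℝ)) * D 0 1 k := by
      rw [this]; rfl
    simpa [hD, mul_comm] using happ
  rcases le_total (s:ℝ) (t:ℝ) with hst | hts
  · show dist (torusProj n k (γ s)) (torusProj n k (γ t)) = _
    rw [key s t hst, abs_of_nonpos (by linarith)]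
    try ring
  · show dist (torusProj n k (γ s)) (torusProj n k (γ t)) = _
    rw [dist_comm, key t s hts, abs_of_nonneg (by linarith)]
    try ring
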